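/- arXiv:1509.08992 — 2 statements merged into one kernel-verified Lean document; each statement's English description precedes it below -/
import Mathlib

section
/- For the exponential family p_θ(x) = exp(θ·t(x) - A(θ)) on a finite set X with ‖t(x)‖₂ ≤ R for all x, the total variation distance satisfies ‖p_θ - p_φ‖_TV ≤ 2R·‖θ - φ‖₂ for all θ, φ ∈ ℝ^n. -/
open scoped RealInnerProductSpace

lemma exp_diff_le_aux (u v : ℝ) :
    |Real.exp u - Real.exp v| ≤ (Real.exp u + Real.exp v) * |u - v| := by
  wlog h : v ≤ u generalizing u v
  · have := this v u (le_of_not_ge h)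
    rw [abs_sub_comm, abs_sub_comm u v]
    linarith [this]
  · rw [abs_of_nonneg (sub_nonneg.2 (Real.exp_le_exp.2 h)), abs_of_nonneg (sub_nonneg.2 h)]
    have h1 : 1 + (v - u) ≤ Real.exp (v - u) := by
      linarith [Real.add_one_le_exp (v - u)]
    have h2 : Real.exp (v - u) * Real.exp u = Real.exp v := by
      rw [← Real.exp_add]; ring_nf
    nlinarith [Real.exp_pos u, Real.exp_pos v]

theorem stmt_4 {X : Type*} [Fintype X] [Nonempty X] {n : ℕ}
    (t : X → EuclideanSpace ℝ (Fin n)) (R : ℝ) (hR : ∀ x, ‖t x‖ ≤ R)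
    (A : EuclideanSpace ℝ (Fin n) → ℝ)
    (hA : ∀ θ, A θ = Real.log (∑ x, Real.exp ⟪θ, t x⟫))
    (p : EuclideanSpace ℝ (Fin n) → X → ℝ)
    (hp : ∀ θ x, p θ x = Real.exp (⟪θ, t x⟫ - A θ))
    (θ φ : EuclideanSpace ℝ (Fin n)) :
    (1 / 2) * ∑ x, |p θ x - p φ x| ≤ 2 * R * ‖θ - φ‖ := by
  have hRnn : 0 ≤ R := le_trans (norm_nonneg _) (hR (Classical.arbitrary X))
  set c := R * ‖θ - φ‖ with hc
  have hcnn : 0 ≤ c := mul_nonneg hRnn (norm_nonneg _)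
  have hinner : ∀ (ψ₁ ψ₂ : EuclideanSpace ℝ (Fin n)) (x : X),
      |⟪ψ₁ - ψ₂, t x⟫| ≤ R * ‖ψ₁ - ψ₂‖ := by
    intro ψ₁ ψ₂ x
    calc |⟪ψ₁ - ψ₂, t x⟫| ≤ ‖ψ₁ - ψ₂‖ * ‖t x‖ := abs_real_inner_le_norm _ _
    _ ≤ ‖ψ₁ - ψ₂‖ * R := by
        exact mul_le_mul_of_nonneg_left (hR x) (norm_nonneg _)
    _ = R * ‖ψ₁ - ψ₂‖ := mul_comm _ _
  have hS : ∀ ψ : EuclideanSpace ℝ (Fin n), 0 < ∑ x, Real.exp ⟪ψ, t x⟫ := fun ψ =>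
    Finset.sum_pos (fun x _ => Real.exp_pos _) Finset.univ_nonempty
  have hAle : ∀ ψ₁ ψ₂ : EuclideanSpace ℝ (Fin n), A ψ₁ - A ψ₂ ≤ R * ‖ψ₁ - ψ₂‖ := by
    intro ψ₁ ψ₂
    have hsum : (∑ x, Real.exp ⟪ψ₁, t x⟫) ≤
        Real.exp (R * ‖ψ₁ - ψ₂‖) * ∑ x, Real.exp ⟪ψ₂, t x⟫ := by
      rw [Finset.mul_sum]
      refine Finset.sum_le_sum fun x _ => ?_
      have h1 : ⟪ψ₁, t x⟫ = ⟪ψ₂, t x⟫ + ⟪ψ₁ - ψ₂, t x⟫ := by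
        rw [inner_sub_left]; ring
      rw [h1, Real.exp_add, mul_comm]
      exact mul_le_mul_of_nonneg_right
        (Real.exp_le_exp.2 ((le_abs_self _).trans (hinner ψ₁ ψ₂ x)))
        (Real.exp_pos _).le
    have := Real.log_le_log (hS ψ₁) hsum
    rw [Real.log_mul (Real.exp_pos _).ne' (hS ψ₂).ne', Real.log_exp] at this
    rw [hA, hA]
    linarith
  have hAabs : |A θ - A φ| ≤ c := by
    rw [abs_le]
    constructor
    · have := hAle φ θ
      rw [norm_sub_rev] at this
      linarith
    · exact hAle θ φ
  have hsum1 : ∀ ψ : EuclideanSpace ℝ (Fin n), ∑ x, p ψ x = 1 := by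
    intro ψ
    simp only [hp, Real.exp_sub]
    rw [← Finset.sum_div, hA, Real.exp_log (hS ψ), div_self (hS ψ).ne']
  have hterm : ∀ x, |p θ x - p φ x| ≤ (p θ x + p φ x) * (2 * c) := by
    intro x
    simp only [hp]
    refine le_trans (exp_diff_le_aux _ _) ?_
    refine mul_le_mul_of_nonneg_left ?_
      (by positivity)
    have h1 : (⟪θ, t x⟫ - A θ) - (⟪φ, t x⟫ - A φ) = ⟪θ - φ, t x⟫ - (A θ - A φ) := by
      rw [inner_sub_left]; ring
    rw [h1]
    calc |⟪θ - φ, t x⟫ - (A θ - A φ)| ≤ |⟪θ - φ, t x⟫| + |A θ - A φ| := abs_sub _ _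
    _ ≤ c + c := add_le_add (hinner θ φ x) hAabs
    _ = 2 * c := by ring
  have hfinal : ∑ x, |p θ x - p φ x| ≤ 2 * (2 * c) := by
    calc ∑ x, |p θ x - p φ x| ≤ ∑ x, (p θ x + p φ x) * (2 * c) :=
          Finset.sum_le_sum fun x _ => hterm x
    _ = (∑ x, p θ x + ∑ x, p φ x) * (2 * c) := by
        rw [← Finset.sum_add_distrib, Finset.sum_mul]
    _ = 2 * (2 * c) := by rw [hsum1, hsum1]; ring
  calc (1 / 2) * ∑ x, |p θ x - p φ x| ≤ (1 / 2) * (2 * (2 * c)) := by linarith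
  _ = 2 * R * ‖θ - φ‖ := by rw [hc]; ring
end

section
/- For the exponential family p_θ(x) = exp(θ·t(x) - A(θ)) on a finite set X with ‖t(x)‖₂ ≤ R, define f(θ) = A(θ) - θ·t̄ + (λ/2)‖θ‖₂² for a fixed vector t̄ ∈ ℝ^n and λ ≥ 0. Then the gradient of f is Lipschitz continuous with constant 4R² + λ, i.e., ‖∇f(θ) - ∇f(φ)‖₂ ≤ (4R² + λ)‖θ - φ‖₂ for all θ, φ. -/
open scoped RealInnerProductSpace
open Finset

lemma expfam_scalar {X : Type*} [Fintype X] [Nonempty X]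
    (k b c : X → ℝ) (B C : ℝ) (hB : ∀ x, |b x| ≤ B) (hC : ∀ x, |c x| ≤ C) :
    |(∑ x, Real.exp (k x + b x) * c x) / (∑ x, Real.exp (k x + b x)) -
      (∑ x, Real.exp (k x) * c x) / (∑ x, Real.exp (k x))| ≤ 4 * B * C := by
  set w : ℝ → X → ℝ := fun s x => Real.exp (k x + s * b x) with hw
  set Z : ℝ → ℝ := fun s => ∑ x, w s x with hZ
  set N : ℝ → ℝ := fun s => ∑ x, w s x * c x with hN
  have hwpos : ∀ s x, 0 < w s x := fun s x => Real.exp_pos _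
  have hZpos : ∀ s, 0 < Z s := fun s =>
    Finset.sum_pos (fun x _ => hwpos s x) Finset.univ_nonempty
  have hwD : ∀ s x, HasDerivAt (fun s => w s x) (w s x * b x) s := by
    intro s x
    have h1 : HasDerivAt (fun s : ℝ => k x + s * b x) (b x) s := by
      simpa using ((hasDerivAt_id s).mul_const (b x)).const_add (k x)
    exact h1.exp
  have hZD : ∀ s, HasDerivAt Z (∑ x, w s x * b x) s := fun s =>
    HasDerivAt.fun_sum (fun x _ => hwD s x)
  have hND : ∀ s, HasDerivAt N (∑ x, w s x * b x * c x) s := fun s =>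
    HasDerivAt.fun_sum (fun x _ => (hwD s x).mul_const (c x))
  set F : ℝ → ℝ := fun s => N s / Z s with hF
  set F' : ℝ → ℝ := fun s =>
    ((∑ x, w s x * b x * c x) * Z s - N s * (∑ x, w s x * b x)) / (Z s) ^ 2 with hF'
  have hFD : ∀ s, HasDerivAt F (F' s) s := fun s =>
    (hND s).div (hZD s) (hZpos s).ne'
  -- bound on F'
  have hbound : ∀ s, |F' s| ≤ 4 * B * C := by
    intro s
    set P : X → ℝ := fun x => w s x / Z s with hP
    have hPpos : ∀ x, 0 < P x := fun x => div_pos (hwpos s x) (hZpos s)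
    have hP1 : ∑ x, P x = 1 := by
      rw [hP]
      rw [← Finset.sum_div]
      exact div_self (hZpos s).ne'
    set β : ℝ := ∑ x, P x * b x with hβ
    set α : ℝ := ∑ x, P x * c x with hα
    have hFeq : F' s = (∑ x, P x * (b x * c x)) - β * α := by
      show ((∑ x, w s x * b x * c x) * Z s - N s * (∑ x, w s x * b x)) / (Z s) ^ 2 = _
      have hZne := (hZpos s).ne'
      have h2 : ∑ x, P x * (b x * c x) = (∑ x, w s x * b x * c x) / Z s := by
        rw [Finset.sum_div]
        exact Finset.sum_congr rfl fun x _ => by simp only [hP]; ring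
      have h3 : α = N s / Z s := by
        rw [hα]
        show _ = (∑ x, w s x * c x) / Z s
        rw [Finset.sum_div]
        exact Finset.sum_congr rfl fun x _ => by simp only [hP]; ring
      have h4 : β = (∑ x, w s x * b x) / Z s := by
        rw [hβ, Finset.sum_div]
        exact Finset.sum_congr rfl fun x _ => by simp only [hP]; ring
      rw [h2, h3, h4]
      field_simp
    have hcov : F' s = ∑ x, P x * ((b x - β) * (c x - α)) := by
      rw [hFeq]
      have h1 : ∀ x ∈ Finset.univ (α := X), P x * ((b x - β) * (c x - α)) =
          P x * (b x * c x) - α * (P x * b x) - β * (P x * c x) + (β * α) * P x := by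
        intro x _; ring
      rw [Finset.sum_congr rfl h1]
      rw [Finset.sum_add_distrib, Finset.sum_sub_distrib, Finset.sum_sub_distrib,
        ← Finset.mul_sum, ← Finset.mul_sum, ← Finset.mul_sum, hP1, ← hβ, ← hα]
      ring
    have hβle : |β| ≤ B := by
      calc |β| ≤ ∑ x, |P x * b x| := Finset.abs_sum_le_sum_abs _ _
        _ ≤ ∑ x, P x * B := by
            apply Finset.sum_le_sum
            intro x _
            rw [abs_mul, abs_of_pos (hPpos x)]
            exact mul_le_mul_of_nonneg_left (hB x) (hPpos x).le
        _ = B := by rw [← Finset.sum_mul, hP1, one_mul]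
    have hαle : |α| ≤ C := by
      calc |α| ≤ ∑ x, |P x * c x| := Finset.abs_sum_le_sum_abs _ _
        _ ≤ ∑ x, P x * C := by
            apply Finset.sum_le_sum
            intro x _
            rw [abs_mul, abs_of_pos (hPpos x)]
            exact mul_le_mul_of_nonneg_left (hC x) (hPpos x).le
        _ = C := by rw [← Finset.sum_mul, hP1, one_mul]
    rw [hcov]
    calc |∑ x, P x * ((b x - β) * (c x - α))|
        ≤ ∑ x, |P x * ((b x - β) * (c x - α))| := Finset.abs_sum_le_sum_abs _ _
      _ ≤ ∑ x, P x * ((2 * B) * (2 * C)) := by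
          apply Finset.sum_le_sum
          intro x _
          rw [abs_mul, abs_of_pos (hPpos x), abs_mul]
          apply mul_le_mul_of_nonneg_left _ (hPpos x).le
          have h1 : |b x - β| ≤ 2 * B := by
            have := hB x
            have := hβle
            calc |b x - β| ≤ |b x| + |β| := abs_sub _ _
              _ ≤ 2 * B := by linarith
          have h2 : |c x - α| ≤ 2 * C := by
            calc |c x - α| ≤ |c x| + |α| := abs_sub _ _
              _ ≤ 2 * C := by linarith [hC x, hαle]
          have hC0 : 0 ≤ C := (abs_nonneg _).trans (hC (Classical.arbitrary X))
          have hB0 : 0 ≤ B := (abs_nonneg _).trans (hB (Classical.arbitrary X))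
          exact mul_le_mul h1 h2 (abs_nonneg _) (by linarith)
      _ = 4 * B * C := by rw [← Finset.sum_mul, hP1]; ring
  -- MVT
  have hmvt : ∀ y ∈ Set.Icc (0:ℝ) 1, ‖F y - F 0‖ ≤ (4 * B * C) * (y - 0) := by
    apply norm_image_sub_le_of_norm_deriv_le_segment'
      (fun y _ => ((hFD y).hasDerivWithinAt))
      (fun y _ => hbound y)
  have h10 := hmvt 1 (by norm_num)
  simp only [sub_zero, mul_one] at h10
  have hF1 : F 1 = (∑ x, Real.exp (k x + b x) * c x) / (∑ x, Real.exp (k x + b x)) := by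
    simp [hF, hN, hZ, hw]
  have hF0 : F 0 = (∑ x, Real.exp (k x) * c x) / (∑ x, Real.exp (k x)) := by
    simp [hF, hN, hZ, hw]
  rw [← hF1, ← hF0]
  simpa using h10

lemma mean_lip {X : Type*} [Fintype X] [Nonempty X] {n : ℕ}
    (t : X → EuclideanSpace ℝ (Fin n)) (R : ℝ) (hR : ∀ x, ‖t x‖ ≤ R)
    (θ φ : EuclideanSpace ℝ (Fin n)) :
    ‖(∑ x, (Real.exp ⟪θ, t x⟫ / ∑ y, Real.exp ⟪θ, t y⟫) • t x) -
      (∑ x, (Real.exp ⟪φ, t x⟫ / ∑ y, Real.exp ⟪φ, t y⟫) • t x)‖ ≤ 4 * R ^ 2 * ‖θ - φ‖ := by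
  set mθ := ∑ x, (Real.exp ⟪θ, t x⟫ / ∑ y, Real.exp ⟪θ, t y⟫) • t x with hmθ
  set mφ := ∑ x, (Real.exp ⟪φ, t x⟫ / ∑ y, Real.exp ⟪φ, t y⟫) • t x with hmφ
  set v := mθ - mφ with hv
  rcases eq_or_ne v 0 with h0 | h0
  · rw [h0, norm_zero]
    have hR0 : 0 ≤ R := (norm_nonneg _).trans (hR (Classical.arbitrary X))
    positivity
  · set u := ‖v‖⁻¹ • v with hu
    have hune : ‖u‖ = 1 := by
      rw [hu, norm_smul, norm_inv, norm_norm,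
        inv_mul_cancel₀ (norm_ne_zero_iff.mpr h0)]
    have hB : ∀ x, |⟪θ - φ, t x⟫| ≤ ‖θ - φ‖ * R := fun x =>
      (abs_real_inner_le_norm _ _).trans
        (mul_le_mul_of_nonneg_left (hR x) (norm_nonneg _))
    have hC : ∀ x, |⟪u, t x⟫| ≤ R := fun x => by
      calc |⟪u, t x⟫| ≤ ‖u‖ * ‖t x‖ := abs_real_inner_le_norm _ _
        _ = ‖t x‖ := by rw [hune, one_mul]
        _ ≤ R := hR x
    have key := expfam_scalar (fun x => ⟪φ, t x⟫) (fun x => ⟪θ - φ, t x⟫)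
      (fun x => ⟪u, t x⟫) (‖θ - φ‖ * R) R hB hC
    have hkb : ∀ x : X, ⟪φ, t x⟫ + ⟪θ - φ, t x⟫ = ⟪θ, t x⟫ := fun x => by
      rw [← inner_add_left]
      congr 1
      abel
    simp only [hkb] at key
    have hm : ∀ ψ : EuclideanSpace ℝ (Fin n),
        ⟪u, ∑ x, (Real.exp ⟪ψ, t x⟫ / ∑ y, Real.exp ⟪ψ, t y⟫) • t x⟫ =
          (∑ x, Real.exp ⟪ψ, t x⟫ * ⟪u, t x⟫) / (∑ y, Real.exp ⟪ψ, t y⟫) := by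
      intro ψ
      rw [inner_sum, Finset.sum_div]
      exact Finset.sum_congr rfl fun x _ => by rw [real_inner_smul_right]; ring
    have huv : ⟪u, v⟫ = ‖v‖ := by
      rw [hu, real_inner_smul_left, real_inner_self_eq_norm_mul_norm]
      field_simp
    have hsplit : ⟪u, v⟫ = ⟪u, mθ⟫ - ⟪u, mφ⟫ := inner_sub_right _ _ _
    have hval : ‖v‖ ≤ 4 * (‖θ - φ‖ * R) * R := by
      rw [← huv, hsplit, hmθ, hmφ]
      rw [hm θ, hm φ]
      exact (le_abs_self _).trans key
    calc ‖v‖ ≤ 4 * (‖θ - φ‖ * R) * R := hval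
      _ = 4 * R ^ 2 * ‖θ - φ‖ := by ring

theorem stmt_5 {X : Type*} [Fintype X] [Nonempty X] {n : ℕ}
    (t : X → EuclideanSpace ℝ (Fin n)) (R : ℝ) (hR : ∀ x, ‖t x‖ ≤ R)
    (A : EuclideanSpace ℝ (Fin n) → ℝ)
    (hA : ∀ θ, A θ = Real.log (∑ x, Real.exp ⟪θ, t x⟫))
    (p : EuclideanSpace ℝ (Fin n) → X → ℝ)
    (hp : ∀ θ x, p θ x = Real.exp (⟪θ, t x⟫ - A θ))
    (tbar : EuclideanSpace ℝ (Fin n)) (lam : ℝ) (hlam : 0 ≤ lam)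
    (g : EuclideanSpace ℝ (Fin n) → EuclideanSpace ℝ (Fin n))
    (hg : ∀ θ, g θ = (∑ x, p θ x • t x) - tbar + lam • θ)
    (θ φ : EuclideanSpace ℝ (Fin n)) :
    ‖g θ - g φ‖ ≤ (4 * R ^ 2 + lam) * ‖θ - φ‖ := by
  have hZpos : ∀ ψ : EuclideanSpace ℝ (Fin n), 0 < ∑ y, Real.exp ⟪ψ, t y⟫ :=
    fun ψ => Finset.sum_pos (fun y _ => Real.exp_pos _) Finset.univ_nonempty
  have hpe : ∀ ψ x, p ψ x = Real.exp ⟪ψ, t x⟫ / ∑ y, Real.exp ⟪ψ, t y⟫ := by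
    intro ψ x
    rw [hp, hA, Real.exp_sub, Real.exp_log (hZpos ψ)]
  have hsplit : g θ - g φ =
      ((∑ x, p θ x • t x) - (∑ x, p φ x • t x)) + lam • (θ - φ) := by
    rw [hg, hg, smul_sub]
    abel
  rw [hsplit]
  calc ‖((∑ x, p θ x • t x) - (∑ x, p φ x • t x)) + lam • (θ - φ)‖
      ≤ ‖(∑ x, p θ x • t x) - (∑ x, p φ x • t x)‖ + ‖lam • (θ - φ)‖ :=
        norm_add_le _ _
    _ ≤ 4 * R ^ 2 * ‖θ - φ‖ + lam * ‖θ - φ‖ := by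
        apply add_le_add
        · simp only [hpe]
          exact mean_lip t R hR θ φ
        · rw [norm_smul, Real.norm_eq_abs, abs_of_nonneg hlam]
    _ = (4 * R ^ 2 + lam) * ‖θ - φ‖ := by ring
end
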